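/- Let n ≥ m ≥ 1 be integers, let u ∈ ℝᵐ with u_j > 0 for all j, and let w ∈ ℝᵐ with w_j ≥ 0 for all j and Σ_{j=1}^m u_j w_j = 2m. Define u′_j := min{u_j, 1/w_j} if w_j > 0 and u′_j := u_j if w_j = 0, and let ũ ∈ ℝᵐ satisfy u′_j ≤ ũ_j ≤ (1 + 1/(3n))·u′_j for all j. Then Σ_{j=1}^m log(u_j / ũ_j) > (1/2)·log(m + 1), where log denotes the natural logarithm. -/

import Mathlib

/-- Weierstrass-type product inequality: `1 + ∑ y ≤ ∏ (1 + y)` for nonneg `y`. -/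
lemma aux_one_add_sum_le_prod {ι : Type*} (s : Finset ι) (y : ι → ℝ)
    (hy : ∀ i ∈ s, 0 ≤ y i) : 1 + ∑ i ∈ s, y i ≤ ∏ i ∈ s, (1 + y i) := by
  induction s using Finset.cons_induction with
  | empty => simp
  | cons a s ha ih =>
    rw [Finset.sum_cons, Finset.prod_cons]
    have h1 : 0 ≤ y a := hy a (Finset.mem_cons_self a s)
    have h2 : ∀ i ∈ s, 0 ≤ y i := fun i hi => hy i (Finset.mem_cons_of_mem hi)
    have hs : 0 ≤ ∑ i ∈ s, y i := Finset.sum_nonneg h2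
    calc 1 + (y a + ∑ i ∈ s, y i)
        ≤ (1 + y a) * (1 + ∑ i ∈ s, y i) := by nlinarith
      _ ≤ (1 + y a) * ∏ i ∈ s, (1 + y i) := by
          apply mul_le_mul_of_nonneg_left (ih h2); linarith

/-- The rounded potential-decrease inequality in Section 4 of the paper: if the
updated bounds `u'_j` are rounded up by a multiplicative factor of at most
`1 + 1/(3n)` (with `n ≥ m`), the potential still drops by more than `½ log(m+1)`. -/
theorem statement15 (n m : ℕ) (hm : 1 ≤ m) (hmn : m ≤ n)
    (u w : Fin m → ℝ) (hu : ∀ j, 0 < u j) (hw : ∀ j, 0 ≤ w j)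
    (hsum : ∑ j, u j * w j = 2 * (m : ℝ))
    (u' : Fin m → ℝ)
    (hu' : ∀ j, u' j = if 0 < w j then min (u j) (1 / w j) else u j)
    (ut : Fin m → ℝ)
    (hut : ∀ j, u' j ≤ ut j ∧ ut j ≤ (1 + 1 / (3 * (n : ℝ))) * u' j) :
    (1 / 2) * Real.log ((m : ℝ) + 1) < ∑ j, Real.log (u j / ut j) := by
  have hn1 : (1:ℕ) ≤ n := le_trans hm hmn
  have hn : (0:ℝ) < 3 * (n:ℝ) := by positivity
  have hup : ∀ j, 0 < u' j := by
    intro j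
    rw [hu' j]
    split_ifs with h
    · exact lt_min (hu j) (by positivity)
    · exact hu j
  -- key pointwise identity: log u - log u' = log (max 1 (u*w))
  have hkey : ∀ j, Real.log (u j) - Real.log (u' j) = Real.log (max 1 (u j * w j)) := by
    intro j
    rw [hu' j]
    split_ifs with h
    · rcases le_or_gt (u j) (1 / (w j)) with hle | hlt
      · have huw : u j * w j ≤ 1 := (le_div_iff₀ h).mp hle
        rw [min_eq_left hle, max_eq_left huw]; simp
      · have huw : 1 ≤ u j * w j := le_of_lt (by
          have := (div_lt_iff₀ h).mp hlt
          linarith)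
        rw [min_eq_right hlt.le, max_eq_right huw, one_div,
          Real.log_inv, Real.log_mul (ne_of_gt (hu j)) (ne_of_gt h)]
        ring
    · have hw0 : w j = 0 := le_antisymm (not_lt.mp h) (hw j)
      simp [hw0]
  -- pointwise lower bound
  have hpt : ∀ j, Real.log (max 1 (u j * w j)) - 1 / (3 * (n:ℝ)) ≤ Real.log (u j / ut j) := by
    intro j
    obtain ⟨h1, h2⟩ := hut j
    have hutp : 0 < ut j := lt_of_lt_of_le (hup j) h1
    have hlut : Real.log (ut j) ≤ Real.log (u' j) + 1 / (3 * (n:ℝ)) := by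
      have := Real.log_le_log hutp h2
      rw [Real.log_mul (by positivity) (ne_of_gt (hup j))] at this
      have hl : Real.log (1 + 1 / (3 * (n:ℝ))) ≤ 1 / (3 * (n:ℝ)) := by
        have := Real.log_le_sub_one_of_pos (show (0:ℝ) < 1 + 1 / (3*(n:ℝ)) by positivity)
        linarith
      linarith
    rw [Real.log_div (ne_of_gt (hu j)) (ne_of_gt hutp), ← hkey j]
    linarith
  -- sum of logs of maxes ≥ log (m+1)
  have hprod : (m:ℝ) + 1 ≤ ∏ j, max 1 (u j * w j) := by
    have := aux_one_add_sum_le_prod Finset.univ (fun j : Fin m => max 1 (u j * w j) - 1)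
      (fun j _ => by simp [le_max_left])
    simp only [add_sub_cancel] at this
    calc (m:ℝ) + 1 = 1 + (2 * (m:ℝ) - m) := by ring
      _ ≤ 1 + ∑ j, (max 1 (u j * w j) - 1) := by
          rw [Finset.sum_sub_distrib]
          simp only [Finset.sum_const, Finset.card_univ, Fintype.card_fin, nsmul_eq_mul, mul_one]
          have : ∑ j, u j * w j ≤ ∑ j, max 1 (u j * w j) :=
            Finset.sum_le_sum (fun j _ => le_max_right _ _)
          rw [hsum] at this
          linarith
      _ ≤ ∏ j, max 1 (u j * w j) := this
  have hsumlog : Real.log ((m:ℝ) + 1) ≤ ∑ j, Real.log (max 1 (u j * w j)) := by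
    rw [← Real.log_prod (s := Finset.univ) (f := fun j => max 1 (u j * w j)) (fun j _ => by positivity)]
    exact Real.log_le_log (by positivity) hprod
  have hfinal : Real.log ((m:ℝ) + 1) - 1/3 ≤ ∑ j, Real.log (u j / ut j) := by
    have h1 : ∑ j, (Real.log (max 1 (u j * w j)) - 1 / (3 * (n:ℝ)))
        ≤ ∑ j, Real.log (u j / ut j) := Finset.sum_le_sum (fun j _ => hpt j)
    rw [Finset.sum_sub_distrib] at h1
    simp only [Finset.sum_const, Finset.card_univ, Fintype.card_fin, nsmul_eq_mul] at h1
    have hmn' : (m:ℝ) * (1 / (3 * (n:ℝ))) ≤ 1/3 := by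
      rw [mul_one_div, div_le_div_iff₀ hn (by norm_num)]
      have : (m:ℝ) ≤ (n:ℝ) := Nat.cast_le.mpr hmn
      nlinarith
    linarith
  have hlog2 : (2:ℝ)/3 < Real.log ((m:ℝ) + 1) := by
    have h2 : Real.log 2 ≤ Real.log ((m:ℝ) + 1) := by
      apply Real.log_le_log (by norm_num)
      have : (1:ℝ) ≤ (m:ℝ) := by exact_mod_cast hm
      linarith
    have := Real.log_two_gt_d9
    linarith
  linarith
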